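/- For 0 < q < 1, the Dirichlet series D(s;q) = Σ_{j≥1} (−1)^{j−1} j^{−s−1} ζ(s + qj), initially defined for Re(s) > 1 − q, extends to a meromorphic function on ℂ whose only poles are simple poles at the points s = 1 − qj for integers j ≥ 1 with residue (−1)^{j−1} j^{−(2−qj)} at s = 1 − qj. -/

import Mathlib

open Complex Filter Topology

namespace Stmt17

noncomputable def C2 : ℝ := ∑' n : ℕ, ((n : ℝ) + 2) ^ (-2 : ℝ)

lemma summable_base : Summable (fun n : ℕ => ((n : ℝ) + 2) ^ (-2 : ℝ)) := by
  have h : Summable (fun n : ℕ => (n : ℝ) ^ (-2 : ℝ)) :=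
    Real.summable_nat_rpow.mpr (by norm_num)
  have h2 := (summable_nat_add_iff 2).mpr h
  exact h2.congr fun n => by push_cast; ring_nf

lemma C2_nonneg : 0 ≤ C2 := tsum_nonneg fun n => Real.rpow_nonneg (by positivity) _

lemma norm_cpow_eq (x : ℝ) (hx : 0 < x) (w : ℂ) : ‖(x : ℂ) ^ w‖ = x ^ w.re := by
  rw [Complex.norm_cpow_eq_rpow_re_of_pos hx]

lemma summable_norm_aux {w : ℂ} (hw : 1 < w.re) :
    Summable (fun n : ℕ => ‖((n : ℂ) + 2) ^ (-w)‖) := by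
  have : ∀ n : ℕ, ‖((n : ℂ) + 2) ^ (-w)‖ = ((n : ℝ) + 2) ^ (-w.re) := by
    intro n
    have : ((n : ℂ) + 2) = (((n : ℝ) + 2 : ℝ) : ℂ) := by push_cast; ring
    rw [this, norm_cpow_eq _ (by positivity), Complex.neg_re]
  rw [summable_congr this]
  have h : Summable (fun n : ℕ => (n : ℝ) ^ (-w.re)) :=
    Real.summable_nat_rpow.mpr (by linarith)
  exact ((summable_nat_add_iff 2).mpr h).congr fun n => by push_cast; ring_nf

lemma zeta_sub_one_eq {w : ℂ} (hw : 1 < w.re) :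
    riemannZeta w - 1 = ∑' n : ℕ, ((n : ℂ) + 2) ^ (-w) := by
  have hsum : Summable (fun n : ℕ => 1 / ((n : ℂ) + 1) ^ w) := by
    have h := Complex.summable_one_div_nat_cpow.mpr hw
    exact ((summable_nat_add_iff 1).mpr h).congr fun n => by push_cast; ring_nf
  rw [zeta_eq_tsum_one_div_nat_add_one_cpow hw, Summable.tsum_eq_zero_add hsum]
  have h0 : 1 / ((0 : ℕ) + 1 : ℂ) ^ w = 1 := by norm_num
  rw [h0, add_sub_cancel_left]
  refine tsum_congr fun n => ?_
  have h1 : ((n + 1 : ℕ) : ℂ) + 1 = (n : ℂ) + 2 := by push_cast; ring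
  rw [h1, Complex.cpow_neg, one_div]


lemma norm_zeta_sub_one_le {w : ℂ} (hw : 2 ≤ w.re) :
    ‖riemannZeta w - 1‖ ≤ C2 * (2 : ℝ) ^ (2 - w.re) := by
  have hw1 : 1 < w.re := by linarith
  rw [zeta_sub_one_eq hw1]
  have hnorm : ∀ n : ℕ, ‖((n : ℂ) + 2) ^ (-w)‖ = ((n : ℝ) + 2) ^ (-w.re) := by
    intro n
    have h2 : ((n : ℂ) + 2) = (((n : ℝ) + 2 : ℝ) : ℂ) := by push_cast; ring
    rw [h2, norm_cpow_eq _ (by positivity), Complex.neg_re]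
  have hpt : ∀ n : ℕ, ((n : ℝ) + 2) ^ (-w.re) ≤
      ((n : ℝ) + 2) ^ (-2 : ℝ) * (2 : ℝ) ^ (2 - w.re) := by
    intro n
    have hb : (0 : ℝ) < (n : ℝ) + 2 := by positivity
    have hsplit : ((n : ℝ) + 2) ^ (-w.re) =
        ((n : ℝ) + 2) ^ (-2 : ℝ) * ((n : ℝ) + 2) ^ (2 - w.re) := by
      rw [← Real.rpow_add hb]; ring_nf
    rw [hsplit]
    refine mul_le_mul_of_nonneg_left ?_ (Real.rpow_nonneg hb.le _)
    exact Real.rpow_le_rpow_of_nonpos (by norm_num) (by linarith) (by linarith)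
  calc ‖∑' n : ℕ, ((n : ℂ) + 2) ^ (-w)‖ ≤ ∑' n : ℕ, ‖((n : ℂ) + 2) ^ (-w)‖ :=
        norm_tsum_le_tsum_norm (summable_norm_aux hw1)
    _ ≤ ∑' n : ℕ, ((n : ℝ) + 2) ^ (-2 : ℝ) * (2 : ℝ) ^ (2 - w.re) := by
        refine Summable.tsum_le_tsum (fun n => ?_) (summable_norm_aux hw1)
          (summable_base.mul_right _)
        rw [hnorm n]; exact hpt n
    _ = C2 * (2 : ℝ) ^ (2 - w.re) := by rw [tsum_mul_right]; rfl


noncomputable def aa (q : ℝ) (j : ℕ) (s : ℂ) : ℂ :=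
  (-1) ^ j * ((j : ℂ) + 1) ^ (-s - 1) * (riemannZeta (s + q * ((j : ℂ) + 1)) - 1)

noncomputable def uu (q ρ : ℝ) (j : ℕ) : ℝ :=
  ((j : ℝ) + 1) ^ (-ρ - 1) * (C2 * (2 : ℝ) ^ (2 - ρ) * ((2 : ℝ) ^ (-q)) ^ (j + 1))

lemma re_shift (q : ℝ) (j : ℕ) (s : ℂ) :
    (s + q * ((j : ℂ) + 1)).re = s.re + q * ((j : ℝ) + 1) := by
  simp [Complex.add_re, Complex.mul_re, Complex.ofReal_re, Complex.ofReal_im]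

lemma norm_aa_le {q ρ : ℝ} (hq0 : 0 < q) {j : ℕ} {s : ℂ}
    (hs : ρ ≤ s.re) (hj : 2 - ρ ≤ q * ((j : ℝ) + 1)) :
    ‖aa q j s‖ ≤ uu q ρ j := by
  have hre : 2 ≤ (s + q * ((j : ℂ) + 1)).re := by
    rw [re_shift]; linarith
  have hz := norm_zeta_sub_one_le hre
  have hpow : ‖((j : ℂ) + 1) ^ (-s - 1)‖ ≤ ((j : ℝ) + 1) ^ (-ρ - 1) := by
    have hb : ((j : ℂ) + 1) = (((j : ℝ) + 1 : ℝ) : ℂ) := by push_cast; ring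
    rw [hb, norm_cpow_eq _ (by positivity)]
    have : (-s - 1).re = -s.re - 1 := by simp
    rw [this]
    exact Real.rpow_le_rpow_of_exponent_le (by simp) (by linarith)
  have h2 : (2 : ℝ) ^ (2 - (s + q * ((j : ℂ) + 1)).re) ≤
      (2 : ℝ) ^ (2 - ρ) * ((2 : ℝ) ^ (-q)) ^ (j + 1) := by
    rw [re_shift]
    have he : (2 : ℝ) ^ (2 - ρ) * ((2 : ℝ) ^ (-q)) ^ (j + 1) =
        (2 : ℝ) ^ (2 - ρ + (-q) * ((j : ℝ) + 1)) := by
      rw [Real.rpow_add (by norm_num), ← Real.rpow_natCast ((2:ℝ) ^ (-q)) (j+1),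
        ← Real.rpow_mul (by norm_num)]
      push_cast; ring_nf
    rw [he]
    exact Real.rpow_le_rpow_of_exponent_le (by norm_num) (by linarith)
  have hnn : (0:ℝ) ≤ ((j : ℝ) + 1) ^ (-ρ - 1) := Real.rpow_nonneg (by positivity) _
  calc ‖aa q j s‖ = ‖((j : ℂ) + 1) ^ (-s - 1)‖ * ‖riemannZeta (s + q * ((j : ℂ) + 1)) - 1‖ := by
        rw [aa]; rw [norm_mul, norm_mul]
        have : ‖(-1 : ℂ) ^ j‖ = 1 := by
          rw [norm_pow]; simp
        rw [this, one_mul]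
    _ ≤ ((j : ℝ) + 1) ^ (-ρ - 1) * (C2 * (2 : ℝ) ^ (2 - (s + q * ((j : ℂ) + 1)).re)) := by
        refine mul_le_mul hpow hz (norm_nonneg _) hnn
    _ ≤ uu q ρ j := by
        rw [uu]
        have := mul_le_mul_of_nonneg_left h2 C2_nonneg
        have := mul_le_mul_of_nonneg_left this hnn
        calc ((j : ℝ) + 1) ^ (-ρ - 1) * (C2 * (2 : ℝ) ^ (2 - (s + q * ((j : ℂ) + 1)).re))
            ≤ ((j : ℝ) + 1) ^ (-ρ - 1) * (C2 * ((2 : ℝ) ^ (2 - ρ) * ((2 : ℝ) ^ (-q)) ^ (j + 1))) := this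
          _ = ((j : ℝ) + 1) ^ (-ρ - 1) * (C2 * (2 : ℝ) ^ (2 - ρ) * ((2 : ℝ) ^ (-q)) ^ (j + 1)) := by ring

lemma summable_uu {q : ℝ} (hq0 : 0 < q) (ρ : ℝ) : Summable (uu q ρ) := by
  set r : ℝ := (2 : ℝ) ^ (-q) with hr
  have hr0 : 0 < r := Real.rpow_pos_of_pos (by norm_num) _
  have hr1 : r < 1 := Real.rpow_lt_one_of_one_lt_of_neg (by norm_num) (by linarith)
  set k : ℕ := ⌈-ρ - 1⌉₊ with hk
  have hgeom : Summable (fun n : ℕ => (n : ℝ) ^ k * r ^ n) :=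
    summable_pow_mul_geometric_of_norm_lt_one k (by rw [Real.norm_eq_abs, abs_of_pos hr0]; exact hr1)
  have hshift : Summable (fun j : ℕ => ((j : ℝ) + 1) ^ k * r ^ (j + 1)) := by
    have := (summable_nat_add_iff 1).mpr hgeom
    exact this.congr fun n => by push_cast; ring
  refine Summable.of_nonneg_of_le (fun j => ?_) (fun j => ?_)
    (hshift.mul_right (C2 * (2 : ℝ) ^ (2 - ρ)))
  · unfold uu
    exact mul_nonneg (Real.rpow_nonneg (by positivity) _)
      (mul_nonneg (mul_nonneg C2_nonneg (Real.rpow_nonneg (by norm_num) _))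
        (pow_nonneg (Real.rpow_nonneg (by norm_num) _) _))
  · unfold uu
    have h1 : ((j : ℝ) + 1) ^ (-ρ - 1) ≤ ((j : ℝ) + 1) ^ k := by
      rw [← Real.rpow_natCast ((j : ℝ) + 1) k]
      exact Real.rpow_le_rpow_of_exponent_le (by simp) ((Nat.le_ceil _))
    have h2 : (0:ℝ) ≤ C2 * (2 : ℝ) ^ (2 - ρ) * r ^ (j + 1) :=
      mul_nonneg (mul_nonneg C2_nonneg (Real.rpow_nonneg (by norm_num) _)) (pow_nonneg hr0.le _)
    calc ((j : ℝ) + 1) ^ (-ρ - 1) * (C2 * (2 : ℝ) ^ (2 - ρ) * r ^ (j + 1))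
        ≤ ((j : ℝ) + 1) ^ k * (C2 * (2 : ℝ) ^ (2 - ρ) * r ^ (j + 1)) :=
          mul_le_mul_of_nonneg_right h1 h2
      _ = ((j : ℝ) + 1) ^ k * r ^ (j + 1) * (C2 * (2 : ℝ) ^ (2 - ρ)) := by ring


lemma ceil_bound {q ρ : ℝ} (hq0 : 0 < q) {M j : ℕ} (hM : (2 - ρ) / q ≤ M) (hj : M ≤ j) :
    2 - ρ ≤ q * ((j : ℝ) + 1) := by
  have h1 : 2 - ρ ≤ q * M := by
    rw [div_le_iff₀ hq0] at hM; linarith [hM]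
  have h2 : (M : ℝ) ≤ (j : ℝ) + 1 := by
    have : (M:ℝ) ≤ (j:ℝ) := Nat.cast_le.mpr hj; linarith
  nlinarith

lemma summable_aa {q : ℝ} (hq0 : 0 < q) (s : ℂ) : Summable (fun j => aa q j s) := by
  refine Summable.of_norm ?_
  set M : ℕ := ⌈(2 - s.re) / q⌉₊ with hM
  rw [← summable_nat_add_iff M]
  refine Summable.of_nonneg_of_le (fun j => norm_nonneg _) (fun j => ?_)
    ((summable_nat_add_iff M).mpr (summable_uu hq0 s.re))
  exact norm_aa_le hq0 le_rfl (ceil_bound hq0 (Nat.le_ceil _) (Nat.le_add_left M j))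

lemma diffAt_pow (j : ℕ) (s : ℂ) :
    DifferentiableAt ℂ (fun s : ℂ => ((j : ℂ) + 1) ^ (-s - 1)) s := by
  refine DifferentiableAt.const_cpow ((differentiable_id.neg.sub_const 1) s) (Or.inl ?_)
  have : (0:ℝ) < (j : ℝ) + 1 := by positivity
  intro h
  have := congrArg Complex.re h
  simp at this
  linarith

lemma diffAt_aa {q : ℝ} {j : ℕ} {s : ℂ} (hs : s ≠ 1 - q * ((j : ℂ) + 1)) :
    DifferentiableAt ℂ (aa q j) s := by
  have hz : DifferentiableAt ℂ (fun s : ℂ => riemannZeta (s + q * ((j : ℂ) + 1))) s := by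
    have h1 : s + q * ((j : ℂ) + 1) ≠ 1 := by
      intro h; apply hs; rw [eq_sub_iff_add_eq]; exact h
    exact (differentiableAt_riemannZeta h1).comp s ((differentiable_id.add_const _) s)
  exact ((differentiableAt_const _).mul (diffAt_pow j s)).mul (hz.sub_const 1)

noncomputable def G : ℂ → ℂ := fun s =>
  if s = 0 then ((Real.log 2 : ℝ) : ℂ) else (1 - (2 : ℂ) ^ (-s)) * riemannZeta (s + 1)

lemma G_ne {s : ℂ} (hs : s ≠ 0) : G s = (1 - (2 : ℂ) ^ (-s)) * riemannZeta (s + 1) :=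
  if_neg hs

lemma tendsto_shift_ne (c : ℂ) :
    Tendsto (fun s : ℂ => s + c) (𝓝[≠] (1 - c)) (𝓝[≠] 1) := by
  rw [tendsto_nhdsWithin_iff]
  constructor
  · have hc : Continuous (fun s : ℂ => s + c) := continuous_id.add continuous_const
    have h := (hc.tendsto (1 - c)).mono_left (nhdsWithin_le_nhds (s := {(1 - c)}ᶜ))
    simpa using h
  · filter_upwards [self_mem_nhdsWithin] with x hx
    simp only [Set.mem_compl_iff, Set.mem_singleton_iff] at hx ⊢
    intro h; apply hx; rw [eq_sub_iff_add_eq]; exact h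

lemma tendsto_mul_zeta (c : ℂ) :
    Tendsto (fun s : ℂ => (s - (1 - c)) * riemannZeta (s + c)) (𝓝[≠] (1 - c)) (𝓝 1) := by
  have h := riemannZeta_residue_one.comp (tendsto_shift_ne c)
  refine h.congr fun s => ?_
  simp only [Function.comp_apply]
  ring_nf

lemma tendsto_G0 :
    Tendsto (fun s : ℂ => (1 - (2 : ℂ) ^ (-s)) * riemannZeta (s + 1)) (𝓝[≠] (0:ℂ))
      (𝓝 ((Real.log 2 : ℝ) : ℂ)) := by
  have hlog : (Complex.log 2) = ((Real.log 2 : ℝ) : ℂ) := (Complex.ofReal_log (by norm_num)).symm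
  have hd : HasDerivAt (fun s : ℂ => 1 - (2 : ℂ) ^ (-s)) ((Real.log 2 : ℝ) : ℂ) 0 := by
    have h1 : HasDerivAt (fun s : ℂ => Complex.log 2 * (-s)) (-Complex.log 2) 0 := by
      simpa using (hasDerivAt_id (0:ℂ)).neg.const_mul (Complex.log 2)
    have h2 := h1.cexp
    simp only [neg_zero, mul_zero, Complex.exp_zero, one_mul] at h2
    have h3 : (fun s : ℂ => Complex.exp (Complex.log 2 * (-s))) =
        fun s : ℂ => (2 : ℂ) ^ (-s) := by
      funext s; rw [Complex.cpow_def_of_ne_zero (by norm_num)]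
    rw [h3] at h2
    have h4 := h2.const_sub 1
    rwa [neg_neg, hlog] at h4
  have hslope := hasDerivAt_iff_tendsto_slope.mp hd
  have h1 : Tendsto (fun s : ℂ => (1 - (2 : ℂ) ^ (-s)) / s) (𝓝[≠] (0:ℂ))
      (𝓝 ((Real.log 2 : ℝ) : ℂ)) := by
    refine hslope.congr fun s => ?_
    rw [slope_def_field]
    simp [Complex.cpow_zero]
  have h2 : Tendsto (fun s : ℂ => s * riemannZeta (s + 1)) (𝓝[≠] (0:ℂ)) (𝓝 1) := by
    have := tendsto_mul_zeta 1
    simp only [sub_self] at this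
    exact this.congr fun s => by rw [sub_zero]
  have h3 := h1.mul h2
  rw [mul_one] at h3
  refine h3.congr' ?_
  filter_upwards [self_mem_nhdsWithin] with s hs
  have hs0 : s ≠ 0 := hs
  field_simp

lemma continuousAt_G0 : ContinuousAt G 0 := by
  have hG0 : G 0 = ((Real.log 2 : ℝ) : ℂ) := if_pos rfl
  unfold ContinuousAt
  rw [hG0, ← nhdsNE_sup_pure]
  refine Tendsto.sup ?_ ?_
  · refine tendsto_G0.congr' ?_
    filter_upwards [self_mem_nhdsWithin] with s hs
    exact (G_ne hs).symm
  · rw [tendsto_pure_left]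
    intro U hU
    have : G 0 ∈ U := by rw [hG0]; exact mem_of_mem_nhds hU
    exact this

lemma diffAt_G_ne {s : ℂ} (hs : s ≠ 0) : DifferentiableAt ℂ G s := by
  have hf : DifferentiableAt ℂ (fun s : ℂ => (1 - (2 : ℂ) ^ (-s)) * riemannZeta (s + 1)) s := by
    have h1 : DifferentiableAt ℂ (fun s : ℂ => (2 : ℂ) ^ (-s)) s :=
      (differentiable_id.neg s).const_cpow (Or.inl (by norm_num))
    have h2 : s + 1 ≠ 1 := by
      intro h; apply hs; simpa using h
    exact ((differentiableAt_const 1).sub h1).mul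
      ((differentiableAt_riemannZeta h2).comp s ((differentiable_id.add_const 1) s))
  refine hf.congr_of_eventuallyEq ?_
  filter_upwards [isOpen_compl_singleton.mem_nhds hs] with x hx
  exact G_ne hx

lemma analyticAt_G (s : ℂ) : AnalyticAt ℂ G s := by
  by_cases hs : s = 0
  · subst hs
    refine Complex.analyticAt_of_differentiable_on_punctured_nhds_of_continuousAt ?_ continuousAt_G0
    filter_upwards [self_mem_nhdsWithin] with z hz
    exact diffAt_G_ne hz
  · have : Differentiable ℂ G := by
      intro z
      by_cases hz : z = 0
      · subst hz
        have := Complex.analyticAt_of_differentiable_on_punctured_nhds_of_continuousAt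
          (f := G) (c := 0) ?_ continuousAt_G0
        · exact this.differentiableAt
        · filter_upwards [self_mem_nhdsWithin] with w hw
          exact diffAt_G_ne hw
      · exact diffAt_G_ne hz
    exact (this.differentiableOn.analyticOnNhd isOpen_univ) s (Set.mem_univ s)


lemma pole_re_lt {q ρ : ℝ} (hq0 : 0 < q) {M j : ℕ} (hM : (2 - ρ) / q ≤ M) {s : ℂ}
    (hs : ρ < s.re) : s ≠ 1 - q * (((j + M : ℕ) : ℂ) + 1) := by
  intro h
  have hre := congrArg Complex.re h
  have h2 : 2 - ρ ≤ q * (((j + M : ℕ) : ℝ) + 1) :=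
    ceil_bound hq0 hM (Nat.le_add_left M j)
  simp only [Complex.sub_re, Complex.one_re, Complex.mul_re, Complex.ofReal_re,
    Complex.ofReal_im, Complex.add_re, Complex.natCast_re, Complex.one_re,
    Complex.add_im, Complex.natCast_im, Complex.one_im] at hre
  rw [hre] at hs
  simp at hs
  push_cast at h2
  linarith

lemma tail_diffOn {q : ℝ} (hq0 : 0 < q) (ρ : ℝ) {M : ℕ} (hM : (2 - ρ) / q ≤ M) :
    DifferentiableOn ℂ (fun s => ∑' j : ℕ, aa q (j + M) s) {s : ℂ | ρ < s.re} := by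
  have hopen : IsOpen {s : ℂ | ρ < s.re} := isOpen_lt continuous_const Complex.continuous_re
  have hu : Summable (fun j => uu q ρ (j + M)) :=
    (summable_nat_add_iff M).mpr (summable_uu hq0 ρ)
  have hbd : ∀ (j : ℕ) (s : ℂ), s ∈ {s : ℂ | ρ < s.re} → ‖aa q (j + M) s‖ ≤ uu q ρ (j + M) :=
    fun j s hs => norm_aa_le hq0 (le_of_lt hs) (ceil_bound hq0 hM (Nat.le_add_left M j))
  have huc := (tendstoUniformlyOn_tsum hu hbd).tendstoLocallyUniformlyOn
  refine huc.differentiableOn ?_ hopen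
  filter_upwards with t
  refine DifferentiableOn.fun_sum fun j _ => fun s hs =>
    (diffAt_aa (pole_re_lt hq0 hM hs)).differentiableWithinAt

lemma tail_analyticAt {q : ℝ} (hq0 : 0 < q) (ρ : ℝ) {M : ℕ} (hM : (2 - ρ) / q ≤ M)
    {s₀ : ℂ} (hs₀ : ρ < s₀.re) :
    AnalyticAt ℂ (fun s => ∑' j : ℕ, aa q (j + M) s) s₀ :=
  ((tail_diffOn hq0 ρ hM).analyticOnNhd (isOpen_lt continuous_const Complex.continuous_re))
    s₀ hs₀

lemma eta_eq {w : ℂ} (hw : 1 < w.re) :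
    ∑' j : ℕ, (-1) ^ j * ((j : ℂ) + 1) ^ (-w) = (1 - (2 : ℂ) ^ (1 - w)) * riemannZeta w := by
  have hw0 : w ≠ 0 := by intro h; rw [h] at hw; norm_num at hw
  set h : ℕ → ℂ := fun n => (n : ℂ) ^ (-w) with hh
  have hnorm : ∀ n : ℕ, ‖h n‖ = (n : ℝ) ^ (-w.re) := by
    intro n
    rcases Nat.eq_zero_or_pos n with h0 | hpos
    · subst h0
      simp only [hh, Nat.cast_zero]
      rw [Complex.zero_cpow (neg_ne_zero.mpr hw0), Real.zero_rpow (by simp; linarith)]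
      simp
    · have : (n : ℂ) = (((n : ℝ)) : ℂ) := by push_cast; rfl
      simp only [hh]
      rw [this, norm_cpow_eq _ (by exact_mod_cast hpos), Complex.neg_re]
  have hnsum : Summable (fun n => ‖h n‖) := by
    rw [summable_congr hnorm]
    exact Real.summable_nat_rpow.mpr (by simp; linarith)
  have hsum : Summable h := hnsum.of_norm
  have hZ : riemannZeta w = ∑' n, h n := by
    rw [zeta_eq_tsum_one_div_nat_cpow hw]
    refine tsum_congr fun n => ?_
    show 1 / (n : ℂ) ^ w = (n : ℂ) ^ (-w)
    rw [Complex.cpow_neg, one_div]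
  have heven : ∀ k : ℕ, h (2 * k) = (2 : ℂ) ^ (-w) * h k := by
    intro k
    simp only [hh]
    have h1 : ((2 * k : ℕ) : ℂ) = (((2 : ℝ)) : ℂ) * (((k : ℝ)) : ℂ) := by push_cast; ring
    rw [h1, mul_cpow_ofReal_nonneg (by norm_num) (Nat.cast_nonneg k)]
    norm_num
  set g : ℕ → ℂ := fun n => (-1) ^ (n + 1) * h n with hg
  have hgnorm : ∀ n, ‖g n‖ = ‖h n‖ := by
    intro n; simp only [hg]; rw [norm_mul, norm_pow]; simp
  have hgsum : Summable g := Summable.of_norm (by rw [summable_congr hgnorm]; exact hnsum)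
  have hge : ∀ k, g (2 * k) = -((2 : ℂ) ^ (-w) * h k) := by
    intro k; simp only [hg]
    rw [heven k, pow_succ, pow_mul]
    simp
  have hgo : ∀ k, g (2 * k + 1) = h (2 * k + 1) := by
    intro k; simp only [hg]
    rw [pow_succ, pow_succ, pow_mul]
    simp
  have hhe : Summable (fun k => h (2 * k)) :=
    ((hsum.mul_left ((2:ℂ) ^ (-w))).congr fun k => (heven k).symm)
  have hho : Summable (fun k => h (2 * k + 1)) :=
    hsum.comp_injective (fun a b hab => by omega)
  have hge' : Summable (fun k => g (2 * k)) :=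
    (((hsum.mul_left ((2:ℂ) ^ (-w))).neg).congr fun k => (hge k).symm)
  have hgo' : Summable (fun k => g (2 * k + 1)) :=
    hho.congr fun k => (hgo k).symm
  have hhsplit := tsum_even_add_odd hhe hho
  have hgsplit := tsum_even_add_odd hge' hgo'
  have hZe : ∑' k, h (2 * k) = (2 : ℂ) ^ (-w) * ∑' n, h n := by
    rw [tsum_congr heven, tsum_mul_left]
  have hLHS : ∑' j : ℕ, (-1) ^ j * ((j : ℂ) + 1) ^ (-w) = ∑' n, g n := by
    rw [Summable.tsum_eq_zero_add hgsum]
    have hg0 : g 0 = 0 := by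
      show (-1 : ℂ) ^ (0 + 1) * ((0 : ℕ) : ℂ) ^ (-w) = 0
      rw [Nat.cast_zero, Complex.zero_cpow (neg_ne_zero.mpr hw0)]
      ring
    rw [hg0, zero_add]
    refine tsum_congr fun j => ?_
    simp only [hg, hh]
    have : ((j + 1 : ℕ) : ℂ) = (j : ℂ) + 1 := by push_cast; rfl
    rw [this, pow_succ, pow_succ]
    ring
  rw [hLHS, ← hgsplit, tsum_congr hge, tsum_congr hgo, tsum_neg, tsum_mul_left]
  have hodd : ∑' k, h (2 * k + 1) = ∑' n, h n - (2 : ℂ) ^ (-w) * ∑' n, h n := by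
    have hx := hhsplit
    rw [hZe] at hx
    linear_combination hx
  rw [hodd, hZ]
  have h2 : (2 : ℂ) ^ (1 - w) = 2 * (2 : ℂ) ^ (-w) := by
    rw [show (1 : ℂ) - w = 1 + -w by ring, Complex.cpow_add _ _ (by norm_num : (2:ℂ) ≠ 0),
      Complex.cpow_one]
  rw [h2]
  ring


noncomputable def DD (q : ℝ) (s : ℂ) : ℂ := G s + ∑' j : ℕ, aa q j s

lemma analyticAt_aa {q : ℝ} {i : ℕ} {s₀ : ℂ} (hs : s₀ ≠ 1 - q * ((i : ℂ) + 1)) :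
    AnalyticAt ℂ (aa q i) s₀ := by
  have hdo : DifferentiableOn ℂ (aa q i) {s : ℂ | s ≠ 1 - q * ((i : ℂ) + 1)} :=
    fun s hs => (diffAt_aa hs).differentiableWithinAt
  exact (hdo.analyticOnNhd isOpen_ne) s₀ hs

lemma analyticAt_DD {q : ℝ} (hq0 : 0 < q) {s₀ : ℂ}
    (hs₀ : ∀ j : ℕ, s₀ ≠ 1 - q * ((j : ℂ) + 1)) : AnalyticAt ℂ (DD q) s₀ := by
  set ρ : ℝ := s₀.re - 1 with hρ
  set M : ℕ := ⌈(2 - ρ) / q⌉₊ with hMdef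
  have hsplit : DD q = fun s =>
      (G s + ∑ i ∈ Finset.range M, aa q i s) + ∑' j : ℕ, aa q (j + M) s := by
    funext s
    rw [DD, ← Summable.sum_add_tsum_nat_add M (summable_aa hq0 s)]
    ring
  rw [hsplit]
  refine AnalyticAt.add (AnalyticAt.add (analyticAt_G s₀) ?_)
    (tail_analyticAt hq0 ρ (Nat.le_ceil _) (by rw [hρ]; linarith))
  exact Finset.analyticAt_fun_sum _ fun i _ => analyticAt_aa (hs₀ i)

lemma pole_ne {q : ℝ} (hq0 : 0 < q) {i j : ℕ} (hij : i ≠ j) :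
    (1 : ℂ) - q * ((j : ℂ) + 1) ≠ 1 - q * ((i : ℂ) + 1) := by
  intro h
  have hre := congrArg Complex.re h
  simp only [Complex.sub_re, Complex.one_re, Complex.mul_re, Complex.ofReal_re,
    Complex.ofReal_im, Complex.add_re, Complex.natCast_re, Complex.add_im,
    Complex.natCast_im, Complex.one_im, Complex.one_re] at hre
  have h3 : q * ((i:ℝ) - j) = 0 := by linarith
  rcases mul_eq_zero.mp h3 with h2 | h1
  · exact hq0.ne' h2
  · exact hij (by exact_mod_cast (sub_eq_zero.mp h1))

lemma cont_modified {q : ℝ} (hq0 : 0 < q) (j : ℕ) :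
    ContinuousAt (fun s : ℂ => ∑' i : ℕ, ite (i = j) 0 (aa q i s))
      (1 - q * ((j : ℂ) + 1)) := by
  set pj : ℂ := 1 - q * ((j : ℂ) + 1) with hpj
  set ρ : ℝ := pj.re - 1 with hρ
  set M : ℕ := max ⌈(2 - ρ) / q⌉₊ (j + 1) with hMdef
  have hMq : (2 - ρ) / q ≤ (M : ℝ) := by
    refine (Nat.le_ceil _).trans ?_
    exact_mod_cast Nat.cast_le.mpr (le_max_left _ _)
  have htail_eq : ∀ (i : ℕ) (s : ℂ), ite (i + M = j) (0:ℂ) (aa q (i + M) s) = aa q (i + M) s := by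
    intro i s
    rw [if_neg]
    have : j + 1 ≤ M := le_max_right _ _
    omega
  have hsum_f : ∀ s : ℂ, Summable (fun i : ℕ => ite (i = j) (0:ℂ) (aa q i s)) := by
    intro s
    rw [← summable_nat_add_iff M]
    refine ((summable_nat_add_iff M).mpr (summable_aa hq0 s)).congr fun i => ?_
    exact (htail_eq i s).symm
  have hsplit : (fun s : ℂ => ∑' i : ℕ, ite (i = j) (0:ℂ) (aa q i s)) =
      fun s => (∑ i ∈ Finset.range M, ite (i = j) (0:ℂ) (aa q i s)) +
        ∑' i : ℕ, aa q (i + M) s := by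
    funext s
    rw [← Summable.sum_add_tsum_nat_add M (hsum_f s)]
    congr 1
    exact tsum_congr fun i => htail_eq i s
  rw [hsplit]
  refine ContinuousAt.add ?_ ?_
  · refine tendsto_finset_sum _ fun i _ => ?_
    by_cases hij : i = j
    · subst hij; simp only [if_pos rfl]; exact continuousAt_const
    · refine ContinuousAt.congr
        ((diffAt_aa (s := pj) (j := i) (pole_ne hq0 hij)).continuousAt) ?_
      filter_upwards with s
      rw [if_neg hij]
  · have hopen : IsOpen {s : ℂ | ρ < s.re} := isOpen_lt continuous_const Complex.continuous_re
    refine (tail_diffOn hq0 ρ hMq).continuousOn.continuousAt (hopen.mem_nhds ?_)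
    show ρ < pj.re
    rw [hρ]; linarith


lemma tendsto_residue {q : ℝ} (hq0 : 0 < q) (j : ℕ) :
    Tendsto (fun s : ℂ => (s - (1 - q * ((j : ℂ) + 1))) * DD q s)
      (𝓝[≠] (1 - q * ((j : ℂ) + 1)))
      (𝓝 ((-1) ^ j * ((j : ℂ) + 1) ^ (-(1 - (q : ℂ) * ((j : ℂ) + 1)) - 1))) := by
  set pj : ℂ := 1 - q * ((j : ℂ) + 1) with hpj
  set c : ℂ := (q : ℂ) * ((j : ℂ) + 1) with hc
  set V : ℂ := (-1) ^ j * ((j : ℂ) + 1) ^ (-pj - 1) with hV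
  have hD : ∀ s : ℂ, DD q s =
      (G s + ∑' i : ℕ, ite (i = j) 0 (aa q i s)) + aa q j s := by
    intro s
    rw [DD, Summable.tsum_eq_add_tsum_ite (summable_aa hq0 s) j]
    ring
  have hsub : Tendsto (fun s : ℂ => s - pj) (𝓝[≠] pj) (𝓝 0) := by
    have hcont : Continuous (fun s : ℂ => s - pj) := continuous_id.sub continuous_const
    have h := (hcont.tendsto pj).mono_left (nhdsWithin_le_nhds (s := {pj}ᶜ))
    simpa using h
  have hg : Tendsto (fun s : ℂ => G s + ∑' i : ℕ, ite (i = j) 0 (aa q i s)) (𝓝[≠] pj)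
      (𝓝 (G pj + ∑' i : ℕ, ite (i = j) 0 (aa q i pj))) :=
    (((analyticAt_G pj).continuousAt.add (cont_modified hq0 j))).tendsto.mono_left
      nhdsWithin_le_nhds
  have h0 : Tendsto (fun s : ℂ => (s - pj) * (G s + ∑' i : ℕ, ite (i = j) 0 (aa q i s)))
      (𝓝[≠] pj) (𝓝 0) := by
    have := hsub.mul hg
    rwa [zero_mul] at this
  have hzeta : Tendsto (fun s : ℂ => (s - pj) * riemannZeta (s + c)) (𝓝[≠] pj) (𝓝 1) :=
    tendsto_mul_zeta c
  have hone : Tendsto (fun s : ℂ => (s - pj) * (riemannZeta (s + c) - 1)) (𝓝[≠] pj) (𝓝 1) := by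
    have h := hzeta.sub hsub
    rw [sub_zero] at h
    refine h.congr fun s => ?_
    ring
  have hpow : Tendsto (fun s : ℂ => (-1 : ℂ) ^ j * ((j : ℂ) + 1) ^ (-s - 1)) (𝓝[≠] pj)
      (𝓝 ((-1) ^ j * ((j : ℂ) + 1) ^ (-pj - 1))) :=
    ((continuousAt_const.mul (diffAt_pow j pj).continuousAt)).tendsto.mono_left
      nhdsWithin_le_nhds
  have hres : Tendsto (fun s : ℂ => (s - pj) * aa q j s) (𝓝[≠] pj) (𝓝 V) := by
    have h := hpow.mul hone
    rw [mul_one] at h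
    refine h.congr fun s => ?_
    rw [aa]
    ring
  have htot := h0.add hres
  rw [zero_add] at htot
  refine htot.congr fun s => ?_
  rw [hD s]
  ring

lemma formula_DD {q : ℝ} (hq0 : 0 < q) (hq1 : q < 1) {s : ℂ} (hs : 1 - q < s.re) :
    DD q s = ∑' j : ℕ,
      (-1) ^ j * ((j : ℂ) + 1) ^ (-s - 1) * riemannZeta (s + q * ((j : ℂ) + 1)) := by
  have hsre : 0 < s.re := by linarith
  have hs0 : s ≠ 0 := by
    intro h; rw [h] at hsre; simp at hsre
  have hsum_e : Summable (fun j : ℕ => (-1 : ℂ) ^ j * ((j : ℂ) + 1) ^ (-s - 1)) := by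
    refine Summable.of_norm ?_
    have hn : ∀ j : ℕ, ‖(-1 : ℂ) ^ j * ((j : ℂ) + 1) ^ (-s - 1)‖ =
        ((j : ℝ) + 1) ^ (-s.re - 1) := by
      intro j
      rw [norm_mul, norm_pow]
      have hb : ((j : ℂ) + 1) = (((j : ℝ) + 1 : ℝ) : ℂ) := by push_cast; ring
      rw [hb, norm_cpow_eq _ (by positivity)]
      have : (-s - 1).re = -s.re - 1 := by simp
      rw [this]
      simp
    rw [summable_congr hn]
    have h : Summable (fun n : ℕ => (n : ℝ) ^ (-s.re - 1)) :=
      Real.summable_nat_rpow.mpr (by linarith)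
    exact ((summable_nat_add_iff 1).mpr h).congr fun n => by push_cast; ring_nf
  have hterm : ∀ j : ℕ,
      (-1 : ℂ) ^ j * ((j : ℂ) + 1) ^ (-s - 1) * riemannZeta (s + q * ((j : ℂ) + 1)) =
      aa q j s + (-1 : ℂ) ^ j * ((j : ℂ) + 1) ^ (-s - 1) := by
    intro j; rw [aa]; ring
  rw [tsum_congr hterm, Summable.tsum_add (summable_aa hq0 s) hsum_e, DD]
  have heta : ∑' j : ℕ, (-1 : ℂ) ^ j * ((j : ℂ) + 1) ^ (-(s + 1)) =
      (1 - (2 : ℂ) ^ (1 - (s + 1))) * riemannZeta (s + 1) :=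
    eta_eq (by simp; linarith)
  have hexp : ∀ j : ℕ, ((j : ℂ) + 1) ^ (-s - 1) = ((j : ℂ) + 1) ^ (-(s + 1)) := by
    intro j; congr 1; ring
  have h1w : (1 : ℂ) - (s + 1) = -s := by ring
  have hG : G s = ∑' j : ℕ, (-1 : ℂ) ^ j * ((j : ℂ) + 1) ^ (-s - 1) := by
    rw [G_ne hs0,
      show (∑' j : ℕ, (-1 : ℂ) ^ j * ((j : ℂ) + 1) ^ (-s - 1)) =
        ∑' j : ℕ, (-1 : ℂ) ^ j * ((j : ℂ) + 1) ^ (-(s + 1)) from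
      tsum_congr fun j => by rw [hexp j],
      heta, h1w]
  rw [hG]
  exact add_comm _ _

theorem main (q : ℝ) (hq0 : 0 < q) (hq1 : q < 1) :
    ∃ D : ℂ → ℂ,
      (∀ s : ℂ, 1 - q < s.re →
        D s = ∑' j : ℕ,
          (-1) ^ j * ((j : ℂ) + 1) ^ (-s - 1) * riemannZeta (s + q * ((j : ℂ) + 1))) ∧
      AnalyticOn ℂ D {s : ℂ | ∀ j : ℕ, s ≠ 1 - q * ((j : ℂ) + 1)} ∧
      (∀ j : ℕ,
        Filter.Tendsto (fun s : ℂ => (s - (1 - q * ((j : ℂ) + 1))) * D s)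
          (nhdsWithin (1 - q * ((j : ℂ) + 1)) {s : ℂ | s ≠ 1 - q * ((j : ℂ) + 1)})
          (nhds ((-1) ^ j * (((j : ℝ) + 1) ^ (q * ((j : ℝ) + 1) - 2) : ℝ)))) := by
  refine ⟨DD q, fun s hs => formula_DD hq0 hq1 hs, ?_, ?_⟩
  · exact fun s hs => (analyticAt_DD hq0 hs).analyticWithinAt
  · intro j
    have h := tendsto_residue hq0 j
    have hval : ((-1 : ℂ) ^ j * ((((j : ℝ) + 1) ^ (q * ((j : ℝ) + 1) - 2) : ℝ) : ℂ)) =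
        (-1 : ℂ) ^ j * ((j : ℂ) + 1) ^ (-(1 - (q : ℂ) * ((j : ℂ) + 1)) - 1) := by
      congr 1
      rw [Complex.ofReal_cpow (by positivity)]
      have hb : ((((j : ℝ) + 1) : ℝ) : ℂ) = (j : ℂ) + 1 := by push_cast; ring
      have he : (((q * ((j : ℝ) + 1) - 2) : ℝ) : ℂ) = -(1 - (q : ℂ) * ((j : ℂ) + 1)) - 1 := by
        push_cast; ring
      rw [hb, he]
    rw [show ((-1 : ℂ) ^ j * ((((j : ℝ) + 1) ^ (q * ((j : ℝ) + 1) - 2) : ℝ) : ℂ)) =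
        (-1 : ℂ) ^ j * ((j : ℂ) + 1) ^ (-(1 - (q : ℂ) * ((j : ℂ) + 1)) - 1) from hval]
    exact h

end Stmt17

theorem stmt_17 (q : ℝ) (hq0 : 0 < q) (hq1 : q < 1) :
    ∃ D : ℂ → ℂ,
      (∀ s : ℂ, 1 - q < s.re →
        D s = ∑' j : ℕ,
          (-1) ^ j * ((j : ℂ) + 1) ^ (-s - 1) * riemannZeta (s + q * ((j : ℂ) + 1))) ∧
      AnalyticOn ℂ D {s : ℂ | ∀ j : ℕ, s ≠ 1 - q * ((j : ℂ) + 1)} ∧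
      (∀ j : ℕ,
        Filter.Tendsto (fun s : ℂ => (s - (1 - q * ((j : ℂ) + 1))) * D s)
          (nhdsWithin (1 - q * ((j : ℂ) + 1)) {s : ℂ | s ≠ 1 - q * ((j : ℂ) + 1)})
          (nhds ((-1) ^ j * (((j : ℝ) + 1) ^ (q * ((j : ℝ) + 1) - 2) : ℝ)))) :=
  Stmt17.main q hq0 hq1
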